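/- Given matrices A_1, …, A_d ∈ M(m×n, F) with pairwise distinct lexicographically-first nonzero positions p(A_1), …, p(A_d), let B ∈ M(m×n, F) be the 0-1 matrix with 1 exactly in the positions p(A_1), …, p(A_d). Then the linear span of A_1, …, A_d contains a matrix of rank at least ρ(B), where ρ(B) is the minimum number of rows and columns needed to cover all nonzero entries of B. -/

import Mathlib

open Matrix

lemma aux_det_ne_zero {F : Type*} [Field F] {r n : ℕ}
    (j : Fin r → Fin n) (hj : Function.Injective j)
    (L : Matrix (Fin r) (Fin r) F)
    (hzero : ∀ a b, j b < j a → L a b = 0)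
    (hdiag : ∀ a, L a a ≠ 0) : L.det ≠ 0 := by
  set σ := Tuple.sort j with hσ
  have hmono : StrictMono (j ∘ σ) :=
    (Tuple.monotone_sort j).strictMono_of_injective (hj.comp σ.injective)
  have h1 : (L.submatrix σ σ).det = L.det := Matrix.det_submatrix_equiv_self σ L
  rw [← h1]
  have htri : (L.submatrix σ σ).BlockTriangular id := by
    intro a b hab
    exact hzero (σ a) (σ b) (hmono hab)
  rw [Matrix.det_of_upperTriangular htri]
  exact Finset.prod_ne_zero_iff.2 fun a _ => hdiag (σ a)

lemma aux_rank_submatrix_le {F : Type*} [Field F] {m n r : ℕ}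
    (M : Matrix (Fin m) (Fin n) F) (f : Fin r → Fin m) (g : Fin r → Fin n) :
    (M.submatrix f g).rank ≤ M.rank := by
  have key : M.submatrix f g =
      (Matrix.of fun a i => if f a = i then (1 : F) else 0) * M *
        (Matrix.of fun j b => if g b = j then (1 : F) else 0) := by
    ext a b
    simp [Matrix.mul_apply, Finset.sum_ite_eq, Finset.sum_ite_eq']
  rw [key]
  exact (Matrix.rank_mul_le_left _ _).trans (Matrix.rank_mul_le_right _ _)

lemma aux_comb {F : Type*} [Field F] {r : ℕ} (V : Fin r → Matrix (Fin r) (Fin r) F)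
    (hV : ∀ s u : Fin r, u < s → ∀ b, V s u b = 0)
    (hL : (Matrix.of fun u b => V u u b).det ≠ 0) :
    ∃ c : Fin r → F, (∑ s, c s • V s).det ≠ 0 := by
  classical
  suffices H : ∀ k : ℕ, ∀ W : Matrix (Fin r) (Fin r) F,
      (Matrix.of fun u b => if u.val < k then V u u b else W u b).det ≠ 0 →
      ∃ c : Fin r → F,
        (Matrix.of fun u b => if u.val < k then ∑ s, c s * V s u b else W u b).det ≠ 0 by
    obtain ⟨c, hc⟩ := H r (Matrix.of fun u b => V u u b) (by
      convert hL using 2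
      ext u b
      simp [u.isLt])
    refine ⟨c, ?_⟩
    convert hc using 2
    ext u b
    simp [u.isLt, Matrix.sum_apply]
  intro k
  induction k with
  | zero =>
    intro W hW
    exact ⟨fun _ => 0, by simpa using hW⟩
  | succ k ih =>
    intro W hW
    by_cases hk : k < r
    · set κ : Fin r := ⟨k, hk⟩ with hκ
      have hκv : (κ : Fin r).val = k := rfl
      have huκeq : ∀ u : Fin r, u.val = k → u = κ := fun u h => Fin.ext (by rw [hκv]; exact h)
      set W' : Matrix (Fin r) (Fin r) F :=
        Matrix.of fun u b => if u.val = k then V κ u b else W u b with hW'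
      have hWeq : (Matrix.of fun u b => if u.val < k then V u u b else W' u b) =
          (Matrix.of fun u b => if u.val < k + 1 then V u u b else W u b) := by
        ext u b
        by_cases h1 : u.val < k
        · simp only [Matrix.of_apply, if_pos h1, if_pos (h1.trans (Nat.lt_succ_self k))]
        · by_cases h2 : u.val = k
          · have hu2 : u = κ := huκeq u h2
            subst hu2
            simp [W', hκv]
          · have h3 : ¬ u.val < k + 1 := by omega
            simp only [hW', Matrix.of_apply, if_neg h1, if_neg h2, if_neg h3]
      obtain ⟨c, hc⟩ := ih W' (by rw [hWeq]; exact hW)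
      set M' : Matrix (Fin r) (Fin r) F :=
        Matrix.of fun u b => if u.val < k then ∑ s, c s * V s u b else W' u b with hM'
      set c0 : Fin r → F := Function.update c κ 0 with hc0
      set M₀ : Matrix (Fin r) (Fin r) F :=
        Matrix.of fun u b => if u.val < k + 1 then ∑ s, c0 s * V s u b else W u b with hM₀
      set t : F := (1 - M₀.det) / M'.det with ht
      set c1 : Fin r → F := Function.update c κ t with hc1
      refine ⟨c1, ?_⟩
      -- sums over coefficient vectors agreeing off κ coincide on rows u < κ
      have hsum : ∀ (c' c'' : Fin r → F), (∀ s, s ≠ κ → c' s = c'' s) →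
          ∀ u b, u < κ → (∑ s, c' s * V s u b) = ∑ s, c'' s * V s u b := by
        intro c' c'' hcc u b hu
        apply Finset.sum_congr rfl
        intro s _
        by_cases hs : s = κ
        · subst hs; rw [hV κ u hu b]; ring
        · rw [hcc s hs]
      have hlt : ∀ u : Fin r, u.val < k → u < κ := by
        intro u hu; rw [Fin.lt_def, hκv]; exact hu
      have hMM' : M' = M₀.updateRow κ (M' κ) := by
        ext u b
        by_cases hu : u = κ
        · subst hu; simp
        · rw [Matrix.updateRow_ne hu]
          simp only [hM', hM₀, Matrix.of_apply]
          by_cases h1 : u.val < k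
          · rw [if_pos h1, if_pos (by omega : u.val < k + 1)]
            exact hsum c c0 (fun s hs => (Function.update_of_ne hs 0 c).symm) u b (hlt u h1)
          · have h2 : ¬ u.val < k + 1 := by
              have : u.val ≠ k := fun h => hu (huκeq u h)
              omega
            rw [if_neg h1, if_neg h2]
            simp only [hW', Matrix.of_apply]
            rw [if_neg (fun h => hu (huκeq u h))]
      have hGoal : (Matrix.of fun u b => if u.val < k + 1 then ∑ s, c1 s * V s u b else W u b)
          = M₀.updateRow κ (M₀ κ + t • M' κ) := by
        ext u b
        by_cases hu : u = κ
        · subst hu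
          rw [Matrix.updateRow_self]
          simp only [Matrix.of_apply, Pi.add_apply, Pi.smul_apply, smul_eq_mul]
          rw [if_pos (show (κ : Fin r).val < k + 1 by rw [hκv]; omega)]
          simp only [hM₀, hM', Matrix.of_apply]
          rw [if_pos (show (κ : Fin r).val < k + 1 by rw [hκv]; omega),
            if_neg (show ¬ (κ : Fin r).val < k by rw [hκv]; omega)]
          rw [show W' κ b = V κ κ b from by
            rw [hW', Matrix.of_apply, if_pos hκv]]
          rw [Finset.sum_eq_add_sum_sdiff_singleton_of_mem (Finset.mem_univ κ)
              (fun s => c1 s * V s κ b),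
            Finset.sum_eq_add_sum_sdiff_singleton_of_mem (Finset.mem_univ κ)
              (fun s => c0 s * V s κ b)]
          have e1 : ∀ s ∈ Finset.univ \ {κ}, c1 s * V s κ b = c s * V s κ b := by
            intro s hs
            rw [hc1, Function.update_of_ne (by simpa using (Finset.mem_sdiff.1 hs).2)]
          have e0 : ∀ s ∈ Finset.univ \ {κ}, c0 s * V s κ b = c s * V s κ b := by
            intro s hs
            rw [hc0, Function.update_of_ne (by simpa using (Finset.mem_sdiff.1 hs).2)]
          rw [Finset.sum_congr rfl e1, Finset.sum_congr rfl e0]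
          simp only [hc1, hc0, Function.update_self]
          ring
        · rw [Matrix.updateRow_ne hu]
          simp only [Matrix.of_apply, hM₀]
          by_cases h1 : u.val < k + 1
          · rw [if_pos h1, if_pos h1]
            have huκ : u < κ := by
              rw [Fin.lt_def, hκv]
              have : u.val ≠ k := fun h => hu (huκeq u h)
              omega
            exact hsum c1 c0 (fun s hs => by
              rw [hc1, hc0, Function.update_of_ne hs, Function.update_of_ne hs]) u b huκ
          · rw [if_neg h1, if_neg h1]
      rw [hGoal]
      have hdet : (M₀.updateRow κ (M₀ κ + t • M' κ)).det = M₀.det + t * M'.det := by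
        rw [Matrix.det_updateRow_add, Matrix.det_updateRow_smul, Matrix.updateRow_eq_self,
          ← hMM']
      rw [hdet, ht, div_mul_cancel₀ _ hc]
      intro h
      apply (one_ne_zero : (1:F) ≠ 0)
      linear_combination h
    · have h1 : ∀ u : Fin r, u.val < k := fun u => by omega
      obtain ⟨c, hc⟩ := ih W (by
        convert hW using 2
        ext u b
        simp only [Matrix.of_apply, if_pos (h1 u), if_pos (Nat.lt_succ_of_lt (h1 u))])
      refine ⟨c, ?_⟩
      convert hc using 2
      ext u b
      simp only [Matrix.of_apply, if_pos (h1 u), if_pos (Nat.lt_succ_of_lt (h1 u))]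

lemma aux_koenig {m n : ℕ} (P : Finset (Fin m × Fin n)) (τ : ℕ)
    (hτ : ∀ (R : Finset (Fin m)) (C : Finset (Fin n)),
      (∀ q ∈ P, q.1 ∈ R ∨ q.2 ∈ C) → τ ≤ R.card + C.card)
    (R : Finset (Fin m)) (C : Finset (Fin n))
    (hcov : ∀ q ∈ P, q.1 ∈ R ∨ q.2 ∈ C) (hcard : R.card + C.card = τ) :
    ∃ S : Finset (Fin m × Fin n), S ⊆ P ∧ S.card = τ ∧
      (∀ x ∈ S, ∀ y ∈ S, x.1 = y.1 → x = y) ∧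
      (∀ x ∈ S, ∀ y ∈ S, x.2 = y.2 → x = y) := by
  classical
  -- Hall for rows of R into columns outside C
  set t : {i // i ∈ R} → Finset (Fin n) :=
    fun i => Finset.univ.filter (fun j => (i.1, j) ∈ P ∧ j ∉ C) with htdef
  have hall1 : ∀ s : Finset {i // i ∈ R}, s.card ≤ (s.biUnion t).card := by
    intro s
    set U := s.biUnion t with hU
    have himg : s.image (fun i => i.1) ⊆ R := by
      intro i hi
      obtain ⟨x, _, rfl⟩ := Finset.mem_image.1 hi
      exact x.2
    have himgcard : (s.image (fun i => i.1)).card = s.card :=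
      Finset.card_image_of_injective _ Subtype.val_injective
    have hcov' : ∀ q ∈ P, q.1 ∈ R \ s.image (fun i => i.1) ∨ q.2 ∈ C ∪ U := by
      intro q hq
      rcases hcov q hq with h | h
      · by_cases hs : q.1 ∈ s.image (fun i => i.1)
        · obtain ⟨x, hx, hxq⟩ := Finset.mem_image.1 hs
          by_cases hc : q.2 ∈ C
          · exact Or.inr (Finset.mem_union_left _ hc)
          · refine Or.inr (Finset.mem_union_right _ ?_)
            refine Finset.mem_biUnion.2 ⟨x, hx, ?_⟩
            simp only [htdef, Finset.mem_filter, Finset.mem_univ, true_and]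
            exact ⟨by rw [hxq]; exact hq, hc⟩
        · exact Or.inl (Finset.mem_sdiff.2 ⟨h, hs⟩)
      · exact Or.inr (Finset.mem_union_left _ h)
    have h1 := hτ _ _ hcov'
    have h2 : (R \ s.image (fun i => i.1)).card = R.card - s.card := by
      rw [Finset.card_sdiff_of_subset himg, himgcard]
    have h3 : (C ∪ U).card ≤ C.card + U.card := Finset.card_union_le _ _
    have h4 : s.card ≤ R.card := himgcard ▸ Finset.card_le_card himg
    omega
  obtain ⟨f, hfinj, hf⟩ := (Finset.all_card_le_biUnion_card_iff_exists_injective t).1 hall1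
  -- Hall for columns of C into rows outside R
  set t' : {j // j ∈ C} → Finset (Fin m) :=
    fun j => Finset.univ.filter (fun i => (i, j.1) ∈ P ∧ i ∉ R) with ht'def
  have hall2 : ∀ s : Finset {j // j ∈ C}, s.card ≤ (s.biUnion t').card := by
    intro s
    set U := s.biUnion t' with hU
    have himg : s.image (fun j => j.1) ⊆ C := by
      intro j hj
      obtain ⟨x, _, rfl⟩ := Finset.mem_image.1 hj
      exact x.2
    have himgcard : (s.image (fun j => j.1)).card = s.card :=
      Finset.card_image_of_injective _ Subtype.val_injective
    have hcov' : ∀ q ∈ P, q.1 ∈ R ∪ U ∨ q.2 ∈ C \ s.image (fun j => j.1) := by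
      intro q hq
      rcases hcov q hq with h | h
      · exact Or.inl (Finset.mem_union_left _ h)
      · by_cases hs : q.2 ∈ s.image (fun j => j.1)
        · obtain ⟨x, hx, hxq⟩ := Finset.mem_image.1 hs
          by_cases hr : q.1 ∈ R
          · exact Or.inl (Finset.mem_union_left _ hr)
          · refine Or.inl (Finset.mem_union_right _ ?_)
            refine Finset.mem_biUnion.2 ⟨x, hx, ?_⟩
            simp only [ht'def, Finset.mem_filter, Finset.mem_univ, true_and]
            exact ⟨by rw [hxq]; exact hq, hr⟩
        · exact Or.inr (Finset.mem_sdiff.2 ⟨h, hs⟩)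
    have h1 := hτ _ _ hcov'
    have h2 : (C \ s.image (fun j => j.1)).card = C.card - s.card := by
      rw [Finset.card_sdiff_of_subset himg, himgcard]
    have h3 : (R ∪ U).card ≤ R.card + U.card := Finset.card_union_le _ _
    have h4 : s.card ≤ C.card := himgcard ▸ Finset.card_le_card himg
    omega
  obtain ⟨g, hginj, hg⟩ := (Finset.all_card_le_biUnion_card_iff_exists_injective t').1 hall2
  have hfP : ∀ i : {i // i ∈ R}, (i.1, f i) ∈ P ∧ f i ∉ C := by
    intro i
    have := hf i
    simp only [htdef, Finset.mem_filter, Finset.mem_univ, true_and] at this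
    exact this
  have hgP : ∀ j : {j // j ∈ C}, (g j, j.1) ∈ P ∧ g j ∉ R := by
    intro j
    have := hg j
    simp only [ht'def, Finset.mem_filter, Finset.mem_univ, true_and] at this
    exact this
  set S1 : Finset (Fin m × Fin n) := R.attach.image (fun i => (i.1, f i)) with hS1
  set S2 : Finset (Fin m × Fin n) := C.attach.image (fun j => (g j, j.1)) with hS2
  refine ⟨S1 ∪ S2, ?_, ?_, ?_, ?_⟩
  · intro q hq
    rcases Finset.mem_union.1 hq with h | h
    · obtain ⟨i, _, rfl⟩ := Finset.mem_image.1 h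
      exact (hfP i).1
    · obtain ⟨j, _, rfl⟩ := Finset.mem_image.1 h
      exact (hgP j).1
  · have hd : Disjoint S1 S2 := by
      rw [Finset.disjoint_left]
      intro q hq1 hq2
      obtain ⟨i, _, rfl⟩ := Finset.mem_image.1 hq1
      obtain ⟨j, _, hj⟩ := Finset.mem_image.1 hq2
      apply (hfP i).2
      have : f i = j.1 := (congrArg Prod.snd hj).symm
      rw [this]; exact j.2
    rw [Finset.card_union_of_disjoint hd, hS1, hS2,
      Finset.card_image_of_injective _ (fun a b hab => by
        exact Subtype.ext (congrArg Prod.fst hab)),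
      Finset.card_image_of_injective _ (fun a b hab => by
        exact Subtype.ext (congrArg Prod.snd hab)),
      Finset.card_attach, Finset.card_attach, hcard]
  · intro x hx y hy hxy
    rcases Finset.mem_union.1 hx with h1 | h1 <;> rcases Finset.mem_union.1 hy with h2 | h2
    · obtain ⟨i, _, rfl⟩ := Finset.mem_image.1 h1
      obtain ⟨i', _, rfl⟩ := Finset.mem_image.1 h2
      have : i = i' := Subtype.ext hxy
      rw [this]
    · obtain ⟨i, _, rfl⟩ := Finset.mem_image.1 h1
      obtain ⟨j, _, rfl⟩ := Finset.mem_image.1 h2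
      have h : (i : Fin m) = g j := hxy
      exact absurd (h ▸ i.2) (hgP j).2
    · obtain ⟨j, _, rfl⟩ := Finset.mem_image.1 h1
      obtain ⟨i, _, rfl⟩ := Finset.mem_image.1 h2
      have h : g j = (i : Fin m) := hxy
      exact absurd (h.symm ▸ i.2) (hgP j).2
    · obtain ⟨j, _, rfl⟩ := Finset.mem_image.1 h1
      obtain ⟨j', _, rfl⟩ := Finset.mem_image.1 h2
      have : j = j' := hginj (by exact hxy)
      rw [this]
  · intro x hx y hy hxy
    rcases Finset.mem_union.1 hx with h1 | h1 <;> rcases Finset.mem_union.1 hy with h2 | h2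
    · obtain ⟨i, _, rfl⟩ := Finset.mem_image.1 h1
      obtain ⟨i', _, rfl⟩ := Finset.mem_image.1 h2
      have : i = i' := hfinj (by exact hxy)
      rw [this]
    · obtain ⟨i, _, rfl⟩ := Finset.mem_image.1 h1
      obtain ⟨j, _, rfl⟩ := Finset.mem_image.1 h2
      have h : f i = (j : Fin n) := hxy
      exact absurd (h.symm ▸ j.2) (hfP i).2
    · obtain ⟨j, _, rfl⟩ := Finset.mem_image.1 h1
      obtain ⟨i, _, rfl⟩ := Finset.mem_image.1 h2
      have h : (j : Fin n) = f i := hxy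
      exact absurd (h ▸ j.2) (hfP i).2
    · obtain ⟨j, _, rfl⟩ := Finset.mem_image.1 h1
      obtain ⟨j', _, rfl⟩ := Finset.mem_image.1 h2
      have : j = j' := Subtype.ext hxy
      rw [this]

/-- Meshulam's lemma: given matrices with pairwise distinct lexicographically-first
nonzero positions `p k`, and `B` the 0-1 matrix supported exactly on these positions,
the span of the matrices contains a matrix of rank at least `ρ(B)`, the minimum number
of rows and columns covering all nonzero entries of `B`. -/
theorem stmt_2 (F : Type*) [Field F] (m n d : ℕ)
    (A : Fin d → Matrix (Fin m) (Fin n) F) (p : Fin d → Fin m × Fin n)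
    -- `p k` is a nonzero position of `A k`
    (hp : ∀ k, A k (p k).1 (p k).2 ≠ 0)
    -- `p k` is the lexicographically first nonzero position of `A k`
    (hlex : ∀ k, ∀ i j, A k i j ≠ 0 → (p k).1 < i ∨ ((p k).1 = i ∧ (p k).2 ≤ j))
    -- the positions are pairwise distinct
    (hinj : Function.Injective p)
    (B : Matrix (Fin m) (Fin n) F)
    (hB : ∀ i j, B i j = if ∃ k, p k = (i, j) then 1 else 0) :
    ∃ M ∈ Submodule.span F (Set.range A),
      sInf {c : ℕ | ∃ (R : Finset (Fin m)) (C : Finset (Fin n)),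
          (∀ i j, B i j ≠ 0 → i ∈ R ∨ j ∈ C) ∧ R.card + C.card = c} ≤ M.rank := by
  classical
  set τ := sInf {c : ℕ | ∃ (R : Finset (Fin m)) (C : Finset (Fin n)),
      (∀ i j, B i j ≠ 0 → i ∈ R ∨ j ∈ C) ∧ R.card + C.card = c} with hτdef
  have hne : {c : ℕ | ∃ (R : Finset (Fin m)) (C : Finset (Fin n)),
      (∀ i j, B i j ≠ 0 → i ∈ R ∨ j ∈ C) ∧ R.card + C.card = c}.Nonempty :=
    ⟨_, Finset.univ, ∅, fun i _ _ => Or.inl (Finset.mem_univ i), rfl⟩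
  obtain ⟨R, C, hcov, hcard⟩ := Nat.sInf_mem hne
  set P : Finset (Fin m × Fin n) :=
    Finset.univ.filter (fun q : Fin m × Fin n => B q.1 q.2 ≠ 0) with hP
  have hPmem : ∀ q : Fin m × Fin n, q ∈ P ↔ B q.1 q.2 ≠ 0 := by
    intro q; simp [hP]
  have hτle : ∀ (R' : Finset (Fin m)) (C' : Finset (Fin n)),
      (∀ q ∈ P, q.1 ∈ R' ∨ q.2 ∈ C') → τ ≤ R'.card + C'.card := by
    intro R' C' h
    exact Nat.sInf_le ⟨R', C', fun i j hb => h (i, j) ((hPmem (i, j)).2 hb), rfl⟩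
  obtain ⟨S, hSP, hScard, hSrow, hScol⟩ :=
    aux_koenig P τ hτle R C (fun q hq => hcov q.1 q.2 ((hPmem q).1 hq)) hcard
  set I := S.image Prod.fst with hI
  have hIcard : I.card = τ := by
    rw [hI, Finset.card_image_of_injOn, hScard]
    intro x hx y hy h
    exact hSrow x hx y hy h
  set iso := I.orderIsoOfFin hIcard with hiso
  have hexist : ∀ a : Fin τ, ∃ x : Fin m × Fin n, x ∈ S ∧ x.1 = (iso a : Fin m) := by
    intro a
    obtain ⟨x, hx, hx2⟩ := Finset.mem_image.1 (iso a).2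
    exact ⟨x, hx, hx2⟩
  choose σp hσS hσ1 using hexist
  have hrowmono : ∀ a b : Fin τ, a < b → (σp a).1 < (σp b).1 := by
    intro a b hab
    rw [hσ1 a, hσ1 b]
    exact Subtype.coe_lt_coe.2 (iso.lt_iff_lt.2 hab)
  have hσinj : Function.Injective σp := by
    intro a b h
    have : (iso a : Fin m) = (iso b : Fin m) := by rw [← hσ1 a, ← hσ1 b, h]
    exact iso.injective (Subtype.ext this)
  have hcolinj : Function.Injective (fun b => (σp b).2) := by
    intro a b h
    exact hσinj (hScol (σp a) (hσS a) (σp b) (hσS b) h)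
  have hkex : ∀ a : Fin τ, ∃ k, p k = σp a := by
    intro a
    have hb : B (σp a).1 (σp a).2 ≠ 0 := (hPmem _).1 (hSP (hσS a))
    rw [hB] at hb
    by_cases h : ∃ k, p k = ((σp a).1, (σp a).2)
    · obtain ⟨k, hk⟩ := h
      exact ⟨k, hk⟩
    · simp [h] at hb
  choose K hK using hkex
  set V : Fin τ → Matrix (Fin τ) (Fin τ) F :=
    fun s => Matrix.of (fun u b => A (K s) (σp u).1 (σp b).2) with hV
  have hVzero : ∀ s u : Fin τ, u < s → ∀ b, V s u b = 0 := by
    intro s u hus b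
    by_contra hne0
    rcases hlex (K s) (σp u).1 (σp b).2 hne0 with h | ⟨h, _⟩
    · rw [hK s] at h
      exact absurd (hrowmono u s hus) (lt_asymm h)
    · rw [hK s] at h
      exact absurd (hrowmono u s hus) (h ▸ lt_irrefl _)
  have hdiag : ∀ a : Fin τ, V a a a ≠ 0 := by
    intro a
    show A (K a) (σp a).1 (σp a).2 ≠ 0
    rw [show σp a = p (K a) from (hK a).symm]
    exact hp (K a)
  have hL : (Matrix.of fun u b => V u u b).det ≠ 0 := by
    apply aux_det_ne_zero (fun b => (σp b).2) hcolinj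
    · intro a b hba
      show A (K a) (σp a).1 (σp b).2 = 0
      by_contra hne0
      rcases hlex (K a) (σp a).1 (σp b).2 hne0 with h | ⟨_, h⟩
      · rw [hK a] at h
        exact lt_irrefl _ h
      · rw [hK a] at h
        exact absurd hba (not_lt.2 h)
    · intro a
      exact hdiag a
  obtain ⟨c, hc⟩ := aux_comb V hVzero hL
  set M := ∑ s, c s • A (K s) with hM
  refine ⟨M, ?_, ?_⟩
  · apply Submodule.sum_mem
    intro s _
    exact Submodule.smul_mem _ _ (Submodule.subset_span ⟨K s, rfl⟩)
  · have hsub : (M.submatrix (fun u => (σp u).1) (fun b => (σp b).2)) = ∑ s, c s • V s := by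
      ext u b
      simp [hM, Matrix.sum_apply, hV]
    have hunit : IsUnit (∑ s, c s • V s) :=
      (Matrix.isUnit_iff_isUnit_det _).2 (isUnit_iff_ne_zero.2 hc)
    have hrank1 : (∑ s, c s • V s).rank = τ := by
      rw [Matrix.rank_of_isUnit _ hunit, Fintype.card_fin]
    calc τ = (∑ s, c s • V s).rank := hrank1.symm
      _ = (M.submatrix (fun u => (σp u).1) (fun b => (σp b).2)).rank := by rw [hsub]
      _ ≤ M.rank := aux_rank_submatrix_le M _ _
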